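/- Fix n : ℕ. Let A_n be the subgroup of invertible linear operators on ℂ^{(Fin n → ZMod 2)} generated by: X_i (i : Fin n) with X_i e_x = e_{Function.update x i (x i + 1)}, and CNOT_{i,j} (i ≠ j) with CNOT_{i,j} e_x = e_{Function.update x j (x i + x j)}. Then an operator W belongs to A_n if and only if there exists a bijective affine map f : (Fin n → ZMod 2) → (Fin n → ZMod 2) over ZMod 2 such that W e_x = e_{f x} for every x : Fin n → ZMod 2. -/

import Mathlib

noncomputable section

/-- The `n`-qubit state space `ℂ^(Fin n → ZMod 2)`. -/
abbrev QState (n : ℕ) := (Fin n → ZMod 2) → ℂ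

/-- The standard basis vector `e x`. -/
def e {n : ℕ} (x : Fin n → ZMod 2) : QState n := Pi.single x 1

/-- The generators of the group of `n`-qubit affine operators: the `X` gates and the
`CNOT` gates, each specified by its action on the standard basis vectors. -/
def affineGens (n : ℕ) : Set (LinearMap.GeneralLinearGroup ℂ (QState n)) :=
  {W | ∃ i : Fin n, ∀ x, W.val (e x) = e (Function.update x i (x i + 1))} ∪
  {W | ∃ i j : Fin n, i ≠ j ∧ ∀ x, W.val (e x) = e (Function.update x j (x i + x j))}

/-- The group `A_n` of `n`-qubit affine operators. -/
def affineGroup (n : ℕ) : Subgroup (LinearMap.GeneralLinearGroup ℂ (QState n)) :=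
  Subgroup.closure (affineGens n)

namespace Stmt15Aux

variable {n : ℕ}

abbrev V (n : ℕ) := Fin n → ZMod 2

/-- GL element from a permutation of basis states. -/
def toGL (f : V n ≃ V n) : LinearMap.GeneralLinearGroup ℂ (QState n) :=
  LinearMap.GeneralLinearGroup.ofLinearEquiv (LinearEquiv.funCongrLeft ℂ ℂ f.symm)

lemma toGL_apply_e (f : V n ≃ V n) (x : V n) : (toGL f).val (e x) = e (f x) := by
  show (LinearEquiv.funCongrLeft ℂ ℂ f.symm : QState n →ₗ[ℂ] QState n) (e x) = e (f x)
  ext y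
  simp [LinearEquiv.funCongrLeft_apply, LinearMap.funLeft, e, Pi.single_apply,
    Equiv.symm_apply_eq, eq_comm]
  congr 1
  simp [eq_comm, Equiv.eq_symm_apply]

lemma GL_ext {W₁ W₂ : LinearMap.GeneralLinearGroup ℂ (QState n)}
    (h : ∀ x, W₁.val (e x) = W₂.val (e x)) : W₁ = W₂ := by
  apply Units.ext
  apply (Pi.basisFun ℂ (V n)).ext
  intro x
  have hx : (Pi.basisFun ℂ (V n)) x = e x := by
    ext y; simp [Pi.basisFun_apply, e, Pi.single]
  rw [hx]; exact h x

end Stmt15Aux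

namespace Stmt15Aux
variable {n : ℕ}

lemma toGL_one : toGL (Equiv.refl (V n)) = 1 :=
  GL_ext fun x => by rw [toGL_apply_e]; rfl

lemma toGL_trans (f g : V n ≃ V n) : toGL (f.trans g) = toGL g * toGL f :=
  GL_ext fun x => by
    rw [toGL_apply_e]
    show _ = ((toGL g).val * (toGL f).val) (e x)
    rw [Module.End.mul_apply, toGL_apply_e, toGL_apply_e]
    rfl

lemma zmod2_cases (c : ZMod 2) : c = 0 ∨ c = 1 := by revert c; decide

lemma addRight_single_mem (i : Fin n) (c : ZMod 2) :
    toGL (Equiv.addRight (Pi.single i c)) ∈ affineGroup n := by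
  rcases zmod2_cases c with rfl | rfl
  · simp only [Pi.single_zero]
    have : Equiv.addRight (0 : V n) = Equiv.refl (V n) := by ext x; simp
    rw [this, toGL_one]; exact one_mem _
  · apply Subgroup.subset_closure
    left
    refine ⟨i, fun x => ?_⟩
    rw [toGL_apply_e]
    have hupd : (Equiv.addRight (Pi.single i 1)) x = Function.update x i (x i + 1) := by
      funext k
      by_cases hk : k = i
      · subst hk; simp [Pi.single_apply, add_comm]
      · simp [Function.update_of_ne hk, Pi.single_apply, hk]
    rw [hupd]

lemma addRight_mem (v : V n) : toGL (Equiv.addRight v) ∈ affineGroup n := by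
  have key : ∀ s : Finset (Fin n),
      toGL (Equiv.addRight (∑ i ∈ s, Pi.single i (v i))) ∈ affineGroup n := by
    intro s
    induction s using Finset.induction with
    | empty =>
        simp only [Finset.sum_empty]
        have : Equiv.addRight (0 : V n) = Equiv.refl (V n) := by ext x; simp
        rw [this, toGL_one]; exact one_mem _
    | insert a s hni ih =>
        rw [Finset.sum_insert hni]
        have : Equiv.addRight (Pi.single a (v a) + ∑ i ∈ s, Pi.single i (v i))
            = (Equiv.addRight (Pi.single a (v a))).trans
              (Equiv.addRight (∑ i ∈ s, Pi.single i (v i))) := by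
          ext x; simp [add_assoc]
        rw [this, toGL_trans]
        exact mul_mem ih (addRight_single_mem a (v a))
  have hv : v = ∑ i ∈ Finset.univ, Pi.single i (v i) := by
    ext k; simp [Pi.single_apply]
  have := key Finset.univ
  rwa [← hv] at this

end Stmt15Aux

namespace Stmt15Aux
variable {n : ℕ}

lemma zmod2_add_add (a b : ZMod 2) : a + (a + b) = b := by revert a b; decide

lemma cnot_involutive (i j : Fin n) (hij : i ≠ j) :
    Function.Involutive (fun x : V n => Function.update x i (x j + x i)) := by
  intro x
  simp only
  rw [Function.update_idem, Function.update_of_ne (Ne.symm hij), Function.update_self,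
    zmod2_add_add, Function.update_eq_self]

lemma cnot_mem (i j : Fin n) (hij : i ≠ j) :
    toGL ((cnot_involutive i j hij).toPerm) ∈ affineGroup n := by
  apply Subgroup.subset_closure
  right
  exact ⟨j, i, Ne.symm hij, fun x => by rw [toGL_apply_e]; rfl⟩

lemma matrix_mem (M : Matrix (Fin n) (Fin n) (ZMod 2)) (hM : M.det ≠ 0) :
    ∃ g ∈ affineGroup n, ∀ x, g.val (e x) = e (M.mulVec x) := by
  apply Matrix.diagonal_transvection_induction_of_det_ne_zero
    (P := fun N => ∃ g ∈ affineGroup n, ∀ x, g.val (e x) = e (N.mulVec x)) M hM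
  · intro D hD
    have hD1 : Matrix.diagonal D = 1 := by
      have h1 : ∀ i, D i = 1 := by
        intro i
        rcases zmod2_cases (D i) with h | h
        · exfalso; apply hD
          rw [Matrix.det_diagonal]
          exact Finset.prod_eq_zero (Finset.mem_univ i) h
        · exact h
      have : D = fun _ => 1 := funext h1
      rw [this]
      simp [Matrix.diagonal_one]
    refine ⟨1, one_mem _, fun x => ?_⟩
    rw [hD1, Matrix.one_mulVec]; rfl
  · rintro ⟨i, j, hij, c⟩
    rcases zmod2_cases c with rfl | rfl
    · refine ⟨1, one_mem _, fun x => ?_⟩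
      rw [Matrix.TransvectionStruct.toMatrix_mk, Matrix.transvection_zero, Matrix.one_mulVec]
      rfl
    · refine ⟨toGL ((cnot_involutive i j hij).toPerm), cnot_mem i j hij, fun x => ?_⟩
      rw [toGL_apply_e]
      have harg : ((cnot_involutive i j hij).toPerm) x
          = (Matrix.TransvectionStruct.mk i j hij 1).toMatrix.mulVec x := by
        show Function.update x i (x j + x i) = _
        rw [Matrix.TransvectionStruct.toMatrix_mk]
        funext k
        simp only [Matrix.transvection, Matrix.add_mulVec, Matrix.one_mulVec,
          Matrix.single_mulVec, Pi.add_apply, one_mul]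
        by_cases hk : k = i
        · subst hk; simp [add_comm]
        · simp [Function.update_of_ne hk]
      rw [harg]
  · rintro A B _ _ ⟨gA, hgA, hA'⟩ ⟨gB, hgB, hB'⟩
    refine ⟨gA * gB, mul_mem hgA hgB, fun x => ?_⟩
    show (gA.val * gB.val) (e x) = _
    rw [Module.End.mul_apply, hB', hA', Matrix.mulVec_mulVec]

lemma lin_mem (L : V n ≃ₗ[ZMod 2] V n) : toGL L.toEquiv ∈ affineGroup n := by
  set M := LinearMap.toMatrix' (L : V n →ₗ[ZMod 2] V n) with hM
  have hdet : M.det ≠ 0 := by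
    have h1 : M * LinearMap.toMatrix' (L.symm : V n →ₗ[ZMod 2] V n) = 1 := by
      rw [← LinearMap.toMatrix'_comp]
      have : (L : V n →ₗ[ZMod 2] V n) ∘ₗ (L.symm : V n →ₗ[ZMod 2] V n) = LinearMap.id := by
        ext x; simp
      rw [this, LinearMap.toMatrix'_id]
    have h2 : LinearMap.toMatrix' (L.symm : V n →ₗ[ZMod 2] V n) * M = 1 := by
      rw [← LinearMap.toMatrix'_comp]
      have : (L.symm : V n →ₗ[ZMod 2] V n) ∘ₗ (L : V n →ₗ[ZMod 2] V n) = LinearMap.id := by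
        ext x; simp
      rw [this, LinearMap.toMatrix'_id]
    have hunit : IsUnit M := ⟨⟨M, _, h1, h2⟩, rfl⟩
    rw [← isUnit_iff_ne_zero]
    exact (Matrix.isUnit_iff_isUnit_det M).mp hunit
  obtain ⟨g, hg, hg'⟩ := matrix_mem M hdet
  have : toGL L.toEquiv = g := by
    apply GL_ext
    intro x
    rw [toGL_apply_e, hg']
    have : M.mulVec x = L.toEquiv x := by
      rw [hM, ← Matrix.toLin'_apply, Matrix.toLin'_toMatrix']
      rfl
    rw [this]
  rw [this]; exact hg

end Stmt15Aux

namespace Stmt15Aux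
variable {n : ℕ}

/-- The CNOT linear map. -/
def cnotLin (i j : Fin n) : V n →ₗ[ZMod 2] V n :=
  LinearMap.id + (LinearMap.single (ZMod 2) (fun _ => ZMod 2) j).comp (LinearMap.proj i)

lemma cnotLin_apply (i j : Fin n) (hij : i ≠ j) (x : V n) :
    cnotLin i j x = Function.update x j (x i + x j) := by
  funext k
  simp only [cnotLin, LinearMap.add_apply, LinearMap.id_apply, LinearMap.comp_apply,
    LinearMap.proj_apply, Pi.add_apply]
  by_cases hk : k = j
  · subst hk; simp [add_comm]
  · simp [Function.update_of_ne hk, Pi.single_apply, hk]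

lemma cnotLin_involutive (i j : Fin n) (hij : i ≠ j) :
    Function.Involutive (cnotLin i j) := by
  intro x
  rw [cnotLin_apply i j hij, cnotLin_apply i j hij]
  exact cnot_involutive j i (Ne.symm hij) x

/-- The CNOT affine equivalence. -/
def cnotAff (i j : Fin n) (hij : i ≠ j) : V n ≃ᵃ[ZMod 2] V n :=
  (LinearEquiv.ofInvolutive (cnotLin i j) (cnotLin_involutive i j hij)).toAffineEquiv

lemma cnotAff_apply (i j : Fin n) (hij : i ≠ j) (x : V n) :
    cnotAff i j hij x = Function.update x j (x i + x j) :=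
  cnotLin_apply i j hij x

end Stmt15Aux

open Stmt15Aux

theorem stmt15 {n : ℕ} (W : LinearMap.GeneralLinearGroup ℂ (QState n)) :
    W ∈ affineGroup n ↔
      ∃ f : (Fin n → ZMod 2) ≃ᵃ[ZMod 2] (Fin n → ZMod 2),
        ∀ x : Fin n → ZMod 2, W.val (e x) = e (f x) := by
  constructor
  · intro hW
    induction hW using Subgroup.closure_induction with
    | mem W hWg =>
        rcases hWg with ⟨i, h⟩ | ⟨i, j, hij, h⟩
        · refine ⟨AffineEquiv.constVAdd (ZMod 2) (V n) (Pi.single i 1), fun x => ?_⟩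
          rw [h x]
          have harg : Function.update x i (x i + 1)
              = AffineEquiv.constVAdd (ZMod 2) (V n) (Pi.single i 1) x := by
            simp only [AffineEquiv.constVAdd, AffineEquiv.coe_mk, Equiv.coe_constVAdd]
            funext k
            show Function.update x i (x i + 1) k = ((Pi.single i 1 : V n) + x) k
            simp only [vadd_eq_add, Pi.add_apply]
            by_cases hk : k = i
            · subst hk; simp [add_comm]
            · simp [Function.update_of_ne hk, Pi.single_apply, hk]
          rw [harg]
        · exact ⟨cnotAff i j hij, fun x => by rw [h x, cnotAff_apply]⟩
    | one =>
        exact ⟨AffineEquiv.refl (ZMod 2) (V n), fun x => rfl⟩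
    | mul W₁ W₂ _ _ ih₁ ih₂ =>
        obtain ⟨f₁, h₁⟩ := ih₁
        obtain ⟨f₂, h₂⟩ := ih₂
        refine ⟨f₂.trans f₁, fun x => ?_⟩
        show (W₁.val * W₂.val) (e x) = _
        rw [Module.End.mul_apply, h₂ x, h₁ (f₂ x)]
        rfl
    | inv W _ ih =>
        obtain ⟨f, h⟩ := ih
        refine ⟨f.symm, fun y => ?_⟩
        have hy := h (f.symm y)
        rw [AffineEquiv.apply_symm_apply] at hy
        rw [← hy]
        have hmul : (W⁻¹).val * W.val = 1 := by
          rw [← Units.val_mul, inv_mul_cancel, Units.val_one]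
        calc (W⁻¹).val (W.val (e (f.symm y))) = ((W⁻¹).val * W.val) (e (f.symm y)) := rfl
      _ = e (f.symm y) := by rw [hmul]; rfl
  · rintro ⟨f, hf⟩
    have hW : W = toGL (Equiv.addRight (f 0)) * toGL f.linear.toEquiv := by
      apply GL_ext
      intro x
      rw [hf x]
      show _ = ((toGL (Equiv.addRight (f 0))).val * (toGL f.linear.toEquiv).val) (e x)
      rw [Module.End.mul_apply, toGL_apply_e, toGL_apply_e]
      have hdec := AffineMap.decomp (f.toAffineMap : (V n) →ᵃ[ZMod 2] (V n))
      have : f x = f.linear x + f 0 := by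
        conv_lhs => rw [show (f x : V n) = f.toAffineMap x from rfl, hdec]
        simp
      rw [this]
      rfl
    rw [hW]
    exact mul_mem (addRight_mem _) (lin_mem _)
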